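/- Let A and Θ be nonempty finite sets, and define 𝒰_R := { u_R ∈ ℝ^{A×Θ} : for every μ ∈ ΔΘ and every a ∈ A*_R(μ), there exists μ' ∈ Δ(supp μ) with A*_R(μ') = {a} }. Then 𝒰_R is open and dense in ℝ^{A×Θ} and its complement has Lebesgue measure zero. -/

import Mathlib

open MeasureTheory

/-- The receiver's best responses `A*_R(μ)` to a belief vector `μ` on a finite state
space. -/
def BRf {A Θ : Type*} [Fintype Θ] (uR : A → Θ → ℝ) (μ : Θ → ℝ) : Set A :=
  {a | ∀ a' : A, ∑ θ, uR a' θ * μ θ ≤ ∑ θ, uR a θ * μ θ}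

/-- The set `𝒰_R` of receiver utilities such that every best response at any belief is
the unique best response at some belief with smaller support. -/
def URset (A Θ : Type) [Fintype A] [Fintype Θ] : Set (A × Θ → ℝ) :=
  {uR | ∀ μ ∈ stdSimplex ℝ Θ, ∀ a ∈ BRf (fun a θ => uR (a, θ)) μ,
    ∃ μ' ∈ stdSimplex ℝ Θ, (∀ θ : Θ, μ' θ ≠ 0 → μ θ ≠ 0) ∧
      BRf (fun a θ => uR (a, θ)) μ' = {a}}

namespace URgen

attribute [local instance] Classical.propDecidable
set_option linter.unusedSectionVars false

variable {A Θ : Type} [Fintype A] [Fintype Θ]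


-- helper sSup lemmas
lemma sSup_image_add {s : Set ℝ} (hne : s.Nonempty) (hbdd : BddAbove s) (t : ℝ) :
    sSup ((· + t) '' s) = sSup s + t := by
  have hbdd' : BddAbove ((· + t) '' s) := by
    obtain ⟨b, hb⟩ := hbdd
    exact ⟨b + t, by rintro _ ⟨x, hx, rfl⟩; exact add_le_add (hb hx) (le_refl t)⟩
  apply le_antisymm
  · refine csSup_le (hne.image _) ?_
    rintro _ ⟨x, hx, rfl⟩
    exact add_le_add (le_csSup hbdd hx) (le_refl t)
  · rw [add_comm, ← le_sub_iff_add_le']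
    refine csSup_le hne fun x hx => ?_
    rw [le_sub_iff_add_le]
    exact le_csSup hbdd' ⟨x, hx, rfl⟩

lemma csSup_image_le_csSup_image_add {α : Type*} {K : Set α} {f g : α → ℝ} (hne : K.Nonempty)
    (hbdd : BddAbove (g '' K)) {c : ℝ} (h : ∀ x ∈ K, f x ≤ g x + c) :
    sSup (f '' K) ≤ sSup (g '' K) + c := by
  refine csSup_le (hne.image _) ?_
  rintro _ ⟨x, hx, rfl⟩
  exact (h x hx).trans (add_le_add (le_csSup hbdd ⟨x, hx, rfl⟩) (le_refl c))


noncomputable def val (u : A × Θ → ℝ) (a : A) (μ : Θ → ℝ) : ℝ := ∑ θ, u (a, θ) * μ θ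

lemma mem_BRf_iff (u : A × Θ → ℝ) (μ : Θ → ℝ) (a : A) :
    a ∈ BRf (fun a θ => u (a, θ)) μ ↔ ∀ a' : A, val u a' μ ≤ val u a μ := Iff.rfl

lemma erase_ne [Nontrivial A] (a : A) : (Finset.univ.erase a).Nonempty := by
  obtain ⟨b, hb⟩ := exists_ne a
  exact ⟨b, Finset.mem_erase.2 ⟨hb, Finset.mem_univ b⟩⟩

noncomputable def m [Nontrivial A] (u : A × Θ → ℝ) (a : A) (μ : Θ → ℝ) : ℝ :=
  (Finset.univ.erase a).inf' (erase_ne a) (fun a' => val u a μ - val u a' μ)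

def K (S : Finset Θ) : Set (Θ → ℝ) := {μ | μ ∈ stdSimplex ℝ Θ ∧ ∀ θ ∉ S, μ θ = 0}

noncomputable def φ [Nontrivial A] (u : A × Θ → ℝ) (a : A) (S : Finset Θ) : ℝ :=
  sSup (m u a '' K S)

lemma continuous_val (u : A × Θ → ℝ) (a : A) : Continuous (val u a) := by
  unfold val
  exact continuous_finset_sum _ fun θ _ => (continuous_const.mul (continuous_apply θ))

lemma continuous_m [Nontrivial A] (u : A × Θ → ℝ) (a : A) : Continuous (m u a) := by
  unfold m
  exact Continuous.finset_inf'_apply (erase_ne a)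
    (fun a' _ => (continuous_val u a).sub (continuous_val u a'))

lemma isCompact_K (S : Finset Θ) : IsCompact (K S) := by
  have h1 : IsClosed {μ : Θ → ℝ | ∀ θ ∉ S, μ θ = 0} := by
    have : {μ : Θ → ℝ | ∀ θ ∉ S, μ θ = 0} = ⋂ θ ∈ {θ | θ ∉ S}, {μ : Θ → ℝ | μ θ = 0} := by
      ext μ; simp [Set.mem_iInter]
    rw [this]
    exact isClosed_biInter fun θ _ => isClosed_eq (continuous_apply θ) continuous_const
  exact (isCompact_stdSimplex ℝ Θ).inter_right h1

lemma nonempty_K {S : Finset Θ} (hS : S.Nonempty) : (K S).Nonempty := by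
  obtain ⟨θ₀, hθ₀⟩ := hS
  refine ⟨fun θ => if θ = θ₀ then 1 else 0, ⟨⟨fun θ => ?_, by simp⟩, fun θ hθ => ?_⟩⟩
  · simp only []; split <;> norm_num
  · have : θ ≠ θ₀ := fun h => hθ (h ▸ hθ₀)
    simp [this]

lemma bddAbove_image_m [Nontrivial A] (u : A × Θ → ℝ) (a : A) (S : Finset Θ) :
    BddAbove (m u a '' K S) :=
  ((isCompact_K S).image (continuous_m u a)).bddAbove

lemma exists_max [Nontrivial A] (u : A × Θ → ℝ) (a : A) {S : Finset Θ} (hS : S.Nonempty) :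
    ∃ μ ∈ K S, m u a μ = φ u a S := by
  obtain ⟨μ, hμ, h⟩ := (isCompact_K S).exists_sSup_image_eq (nonempty_K hS)
    (continuous_m u a).continuousOn
  exact ⟨μ, hμ, h.symm⟩
noncomputable def χ (a : A) : A × Θ → ℝ := fun p => if p.1 = a then 1 else 0

lemma val_shift_self (u : A × Θ → ℝ) (t : ℝ) (a : A) {μ : Θ → ℝ} (hμ : ∑ θ, μ θ = 1) :
    val (u + t • χ a) a μ = val u a μ + t := by
  unfold val χ
  simp only [Pi.add_apply, Pi.smul_apply, smul_eq_mul, if_pos rfl, add_mul, mul_one]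
  rw [Finset.sum_add_distrib, ← Finset.mul_sum, hμ, mul_one]
  simp

lemma val_shift_other (u : A × Θ → ℝ) (t : ℝ) {a b : A} (h : b ≠ a) (μ : Θ → ℝ) :
    val (u + t • χ a) b μ = val u b μ := by
  unfold val χ
  simp only [Pi.add_apply, Pi.smul_apply, smul_eq_mul, if_neg h, mul_zero, add_zero]

lemma m_shift [Nontrivial A] (u : A × Θ → ℝ) (t : ℝ) (a : A) {μ : Θ → ℝ}
    (hμ : ∑ θ, μ θ = 1) : m (u + t • χ a) a μ = m u a μ + t := by
  unfold m
  have h1 : (Finset.univ.erase a).inf' (erase_ne a)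
        (fun a' => val (u + t • χ a) a μ - val (u + t • χ a) a' μ)
      = (Finset.univ.erase a).inf' (erase_ne a)
        (fun a' => (val u a μ - val u a' μ) + t) := by
    refine Finset.inf'_congr _ rfl fun a' ha' => ?_
    rw [val_shift_self u t a hμ, val_shift_other u t (Finset.ne_of_mem_erase ha') μ]
    ring
  rw [h1]
  apply le_antisymm
  · obtain ⟨b, hb, hfb⟩ := Finset.exists_mem_eq_inf' (erase_ne a)
      (fun a' => val u a μ - val u a' μ)
    rw [hfb]
    exact Finset.inf'_le _ hb
  · exact Finset.le_inf' _ _ fun b hb => add_le_add (Finset.inf'_le _ hb) le_rfl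

lemma phi_shift [Nontrivial A] (u : A × Θ → ℝ) (t : ℝ) (a : A) {S : Finset Θ}
    (hS : S.Nonempty) : φ (u + t • χ a) a S = φ u a S + t := by
  unfold φ
  have h1 : m (u + t • χ a) a '' K S = (· + t) '' (m u a '' K S) := by
    rw [Set.image_image]
    exact Set.image_congr fun μ hμ => m_shift u t a hμ.1.2
  rw [h1, sSup_image_add ((nonempty_K hS).image _) (bddAbove_image_m u a S)]

noncomputable def D (u v : A × Θ → ℝ) : ℝ := ∑ p : A × Θ, |u p - v p|

lemma D_nonneg (u v : A × Θ → ℝ) : 0 ≤ D u v :=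
  Finset.sum_nonneg fun p _ => abs_nonneg _

lemma D_comm (u v : A × Θ → ℝ) : D u v = D v u := by
  unfold D; exact Finset.sum_congr rfl fun p _ => abs_sub_comm _ _

lemma mem_K_le_one {S : Finset Θ} {μ : Θ → ℝ} (hμ : μ ∈ K S) (θ : Θ) : μ θ ≤ 1 := by
  have := Finset.single_le_sum (f := μ) (fun i _ => hμ.1.1 i) (Finset.mem_univ θ)
  rw [hμ.1.2] at this; exact this

lemma val_diff_le (u v : A × Θ → ℝ) (b : A) {S : Finset Θ} {μ : Θ → ℝ} (hμ : μ ∈ K S) :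
    |val u b μ - val v b μ| ≤ D u v := by
  unfold val
  rw [← Finset.sum_sub_distrib]
  calc |∑ θ, (u (b, θ) * μ θ - v (b, θ) * μ θ)|
      ≤ ∑ θ, |u (b, θ) * μ θ - v (b, θ) * μ θ| := Finset.abs_sum_le_sum_abs _ _
    _ ≤ ∑ θ, |u (b, θ) - v (b, θ)| := by
        refine Finset.sum_le_sum fun θ _ => ?_
        rw [← sub_mul, abs_mul, abs_of_nonneg (hμ.1.1 θ)]
        exact mul_le_of_le_one_right (abs_nonneg _) (mem_K_le_one hμ θ)
    _ ≤ D u v := by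
        unfold D
        rw [Fintype.sum_prod_type]
        exact Finset.single_le_sum
          (f := fun a => ∑ θ, |u (a, θ) - v (a, θ)|)
          (fun a _ => Finset.sum_nonneg fun θ _ => abs_nonneg _) (Finset.mem_univ b)

lemma m_diff_le [Nontrivial A] (u v : A × Θ → ℝ) (a : A) {S : Finset Θ} {μ : Θ → ℝ}
    (hμ : μ ∈ K S) : m u a μ ≤ m v a μ + 2 * D u v := by
  rw [← sub_le_iff_le_add]
  rw [show m v a μ = (Finset.univ.erase a).inf' (erase_ne a)
    (fun a' => val v a μ - val v a' μ) from rfl]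
  rw [Finset.le_inf'_iff]
  intro a' ha'
  have h0 : m u a μ ≤ val u a μ - val u a' μ := Finset.inf'_le _ ha'
  have h1 := abs_le.1 (val_diff_le u v a hμ)
  have h2 := abs_le.1 (val_diff_le u v a' hμ)
  linarith [h1.1, h1.2, h2.1, h2.2]

lemma phi_diff_le [Nontrivial A] (u v : A × Θ → ℝ) (a : A) {S : Finset Θ} (hS : S.Nonempty) :
    φ u a S ≤ φ v a S + 2 * D u v :=
  csSup_image_le_csSup_image_add (nonempty_K hS) (bddAbove_image_m v a S)
    (fun μ hμ => m_diff_le u v a hμ)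

lemma abs_phi_diff_le [Nontrivial A] (u v : A × Θ → ℝ) (a : A) {S : Finset Θ}
    (hS : S.Nonempty) : |φ u a S - φ v a S| ≤ 2 * D u v := by
  rw [abs_sub_le_iff]
  constructor
  · linarith [phi_diff_le u v a hS]
  · have := phi_diff_le v u a hS
    rw [D_comm v u] at this
    linarith

lemma continuous_phi [Nontrivial A] (a : A) {S : Finset Θ} (hS : S.Nonempty) :
    Continuous fun u : A × Θ → ℝ => φ u a S := by
  have : LipschitzWith (2 * Fintype.card (A × Θ)) (fun u : A × Θ → ℝ => φ u a S) := by
    refine LipschitzWith.of_dist_le_mul fun u v => ?_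
    rw [Real.dist_eq]
    refine (abs_phi_diff_le u v a hS).trans ?_
    have hD : D u v ≤ Fintype.card (A × Θ) * dist u v := by
      unfold D
      calc ∑ p : A × Θ, |u p - v p| ≤ ∑ _p : A × Θ, dist u v :=
            Finset.sum_le_sum fun p _ => by
              rw [← Real.dist_eq]; exact dist_le_pi_dist u v p
        _ = Fintype.card (A × Θ) * dist u v := by
            rw [Finset.sum_const, nsmul_eq_mul, Finset.card_univ]
    push_cast
    nlinarith [dist_nonneg (x := u) (y := v)]
  exact this.continuous

lemma isClosed_Z [Nontrivial A] (a : A) {S : Finset Θ} (hS : S.Nonempty) :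
    IsClosed {u : A × Θ → ℝ | φ u a S = 0} :=
  isClosed_eq (continuous_phi a hS) continuous_const

lemma norm_chi_le (a : A) : ‖(χ a : A × Θ → ℝ)‖ ≤ 1 := by
  rw [pi_norm_le_iff_of_nonneg zero_le_one]
  intro p
  unfold χ
  split <;> simp

lemma null_Z [Nontrivial A] (a : A) {S : Finset Θ} (hS : S.Nonempty) :
    volume {u : A × Θ → ℝ | φ u a S = 0} = 0 := by
  set Z := {u : A × Θ → ℝ | φ u a S = 0} with hZ
  have hZm : MeasurableSet Z := (isClosed_Z a hS).measurableSet
  have key : ∀ R : ℕ, volume (Z ∩ Metric.closedBall 0 R) = 0 := by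
    intro R
    set W := Z ∩ Metric.closedBall (0 : A × Θ → ℝ) R with hW
    have hWm : MeasurableSet W := hZm.inter measurableSet_closedBall
    set t : ℕ → ℝ := fun n => 1 / (n + 1) with ht
    have htmem : ∀ n, t n ∈ Set.Ioc (0 : ℝ) 1 := by
      intro n
      constructor
      · positivity
      · rw [div_le_one (by positivity)]; linarith [Nat.cast_nonneg (α := ℝ) n]
    have htinj : Function.Injective t := by
      intro n m h
      simp only [ht] at h
      field_simp at h
      have h' : (n : ℝ) = m := by linarith
      exact_mod_cast h'
    set f : ℕ → Set (A × Θ → ℝ) := fun n => (· + (-(t n) • χ a)) ⁻¹' W with hf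
    have hfm : ∀ n, MeasurableSet (f n) :=
      fun n => hWm.preimage (measurable_add_const _)
    have hfvol : ∀ n, volume (f n) = volume W :=
      fun n => measure_preimage_add_right volume _ W
    have hfsub : ∀ n, f n ⊆ Metric.closedBall (0 : A × Θ → ℝ) (R + 1) := by
      intro n u hu
      have hu2 : u + (-(t n) • χ a) ∈ W := hu
      have hnorm : ‖u + (-(t n) • χ a)‖ ≤ R := by
        have := hu2.2
        rwa [Metric.mem_closedBall, dist_zero_right] at this
      rw [Metric.mem_closedBall, dist_zero_right]
      calc ‖u‖ = ‖(u + (-(t n) • χ a)) + (t n) • χ a‖ := by congr 1; module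
        _ ≤ ‖u + (-(t n) • χ a)‖ + ‖(t n) • χ a‖ := norm_add_le _ _
        _ ≤ R + 1 := by
            refine add_le_add hnorm ?_
            rw [norm_smul, Real.norm_eq_abs, abs_of_pos (htmem n).1]
            calc t n * ‖χ a (Θ := Θ)‖ ≤ 1 * 1 :=
              mul_le_mul (htmem n).2 (norm_chi_le a) (norm_nonneg _) zero_le_one
            _ = 1 := one_mul 1
      done
    have hdisj : Pairwise (Function.onFun Disjoint f) := by
      intro n m hnm
      show Disjoint (f n) (f m)
      rw [Set.disjoint_left]
      intro u hun hum
      have h1 : u + (-(t n) • χ a) ∈ Z := hun.1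
      have h2 : u + (-(t m) • χ a) ∈ Z := hum.1
      have e1 : φ (u + (-(t n)) • χ a) a S = φ u a S + (-(t n)) := phi_shift u _ a hS
      have e2 : φ (u + (-(t m)) • χ a) a S = φ u a S + (-(t m)) := phi_shift u _ a hS
      have z1 : φ (u + (-(t n)) • χ a) a S = 0 := h1
      have z2 : φ (u + (-(t m)) • χ a) a S = 0 := h2
      have : t n = t m := by rw [e1] at z1; rw [e2] at z2; linarith
      exact hnm (htinj this)
    have hsum : ∑' _ : ℕ, volume W ≤ volume (Metric.closedBall (0 : A × Θ → ℝ) (R + 1)) := by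
      calc ∑' n : ℕ, volume W = ∑' n : ℕ, volume (f n) := by
            exact tsum_congr fun n => (hfvol n).symm
        _ = volume (⋃ n, f n) := (measure_iUnion hdisj hfm).symm
        _ ≤ _ := measure_mono (Set.iUnion_subset hfsub)
    have hballlt : volume (Metric.closedBall (0 : A × Θ → ℝ) (R + 1)) < ⊤ :=
      (isCompact_closedBall _ _).measure_lt_top
    by_contra hne
    rw [ENNReal.tsum_const_eq_top_of_ne_zero hne] at hsum
    exact absurd (lt_of_le_of_lt hsum hballlt) (lt_irrefl _)
  have hcover : Z ⊆ ⋃ R : ℕ, Z ∩ Metric.closedBall (0 : A × Θ → ℝ) R := by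
    intro u hu
    obtain ⟨R, hR⟩ := exists_nat_ge ‖u‖
    exact Set.mem_iUnion.2 ⟨R, hu, by rwa [Metric.mem_closedBall, dist_zero_right]⟩
  exact measure_mono_null hcover (measure_iUnion_null key)

lemma le_m_of_BR [Nontrivial A] {u : A × Θ → ℝ} {μ : Θ → ℝ} {a : A}
    (ha : ∀ a' : A, val u a' μ ≤ val u a μ) : 0 ≤ m u a μ :=
  Finset.le_inf' _ _ fun a' _ => sub_nonneg.2 (ha a')

lemma BR_of_m_pos [Nontrivial A] {u : A × Θ → ℝ} {μ : Θ → ℝ} {a : A}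
    (h : 0 < m u a μ) : BRf (fun a θ => u (a, θ)) μ = {a} := by
  have hlt : ∀ a' : A, a' ≠ a → val u a' μ < val u a μ := by
    intro a' ha'
    have := Finset.inf'_le (fun b => val u a μ - val u b μ)
      (Finset.mem_erase.2 ⟨ha', Finset.mem_univ a'⟩)
    have h2 : 0 < val u a μ - val u a' μ := lt_of_lt_of_le h this
    linarith
  ext b
  simp only [Set.mem_singleton_iff, mem_BRf_iff]
  constructor
  · intro hb
    by_contra hba
    exact absurd (hb a) (not_le.2 (hlt b hba))
  · rintro rfl a'
    rcases eq_or_ne a' b with rfl | h'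
    · exact le_refl _
    · exact (hlt a' h').le

def Gset (A Θ : Type) [Fintype A] [Fintype Θ] [Nontrivial A] : Set (A × Θ → ℝ) :=
  {u | ∀ a : A, ∀ S : Finset Θ, S.Nonempty → φ u a S ≠ 0}

lemma URset_eq_Gset [Nontrivial A] : URset A Θ = Gset A Θ := by
  apply Set.Subset.antisymm
  · -- URset ⊆ Gset
    intro u hu a S hS hφ0
    obtain ⟨μ, hμK, hm⟩ := exists_max u a hS
    have ha : a ∈ BRf (fun a θ => u (a, θ)) μ := by
      rw [mem_BRf_iff]
      intro a'
      rcases eq_or_ne a' a with rfl | h'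
      · exact le_refl _
      · have := Finset.inf'_le (fun b => val u a μ - val u b μ)
          (Finset.mem_erase.2 ⟨h', Finset.mem_univ a'⟩)
        rw [show (Finset.univ.erase a).inf' (erase_ne a)
          (fun b => val u a μ - val u b μ) = m u a μ from rfl, hm, hφ0] at this
        linarith
    obtain ⟨μ', hμ's, hsupp, hBR⟩ := hu μ hμK.1 a ha
    have hμ'K : μ' ∈ K S := by
      refine ⟨hμ's, fun θ hθ => ?_⟩
      by_contra h
      exact (hsupp θ h) (hμK.2 θ hθ)
    have haBR : a ∈ BRf (fun a θ => u (a, θ)) μ' := hBR ▸ rfl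
    have hm' : 0 < m u a μ' := by
      rw [show m u a μ' = (Finset.univ.erase a).inf' (erase_ne a)
        (fun a' => val u a μ' - val u a' μ') from rfl, Finset.lt_inf'_iff]
      intro a' ha'
      have ha'ne : a' ≠ a := Finset.ne_of_mem_erase ha'
      have ha'nBR : a' ∉ BRf (fun a θ => u (a, θ)) μ' := by
        rw [hBR]; exact ha'ne
      rw [mem_BRf_iff] at ha'nBR
      push_neg at ha'nBR
      obtain ⟨b, hb⟩ := ha'nBR
      have hba : val u b μ' ≤ val u a μ' := haBR b
      linarith [sub_pos.2 (lt_of_lt_of_le hb hba)]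
    have : m u a μ' ≤ φ u a S := le_csSup (bddAbove_image_m u a S) ⟨μ', hμ'K, rfl⟩
    rw [hφ0] at this
    linarith
  · -- Gset ⊆ URset
    intro u hu μ hμ a ha
    set S : Finset Θ := Finset.univ.filter (fun θ => μ θ ≠ 0) with hSdef
    have hS : S.Nonempty := by
      by_contra h
      rw [Finset.not_nonempty_iff_eq_empty] at h
      have hall : ∀ θ : Θ, μ θ = 0 := by
        intro θ
        by_contra hθ
        have : θ ∈ S := by simp [hSdef, hθ]
        rw [h] at this
        exact absurd this (Finset.notMem_empty θ)
      have : (1 : ℝ) = 0 := by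
        rw [← hμ.2]
        exact Finset.sum_eq_zero fun θ _ => hall θ
      norm_num at this
    have hμK : μ ∈ K S := by
      refine ⟨hμ, fun θ hθ => ?_⟩
      by_contra h
      exact hθ (by simp [hSdef, h])
    have h0 : 0 ≤ m u a μ := le_m_of_BR ha
    have hφ0 : 0 ≤ φ u a S :=
      h0.trans (le_csSup (bddAbove_image_m u a S) ⟨μ, hμK, rfl⟩)
    have hφpos : 0 < φ u a S := lt_of_le_of_ne hφ0 (Ne.symm (hu a S hS))
    obtain ⟨μ', hμ'K, hm'⟩ := exists_max u a hS
    refine ⟨μ', hμ'K.1, fun θ h => ?_, BR_of_m_pos (hm' ▸ hφpos)⟩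
    have hθS : θ ∈ S := by
      by_contra hθ
      exact h (hμ'K.2 θ hθ)
    simpa [hSdef] using hθS

lemma Gset_eq_iInter [Nontrivial A] : Gset A Θ =
    ⋂ (a : A), ⋂ (S : Finset Θ), ⋂ (_ : S.Nonempty), {u : A × Θ → ℝ | φ u a S ≠ 0} := by
  ext u
  simp [Gset]

lemma isOpen_Gset [Nontrivial A] : IsOpen (Gset A Θ) := by
  rw [Gset_eq_iInter]
  refine isOpen_iInter_of_finite fun a => isOpen_iInter_of_finite fun S =>
    isOpen_iInter_of_finite fun hS => ?_
  exact (isClosed_Z a hS).isOpen_compl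

lemma null_Gset_compl [Nontrivial A] : volume (Gset A Θ)ᶜ = 0 := by
  rw [Gset_eq_iInter]
  simp only [Set.compl_iInter]
  refine measure_iUnion_null fun a => measure_iUnion_null fun S =>
    measure_iUnion_null fun hS => ?_
  rw [show ({u : A × Θ → ℝ | φ u a S ≠ 0})ᶜ = {u : A × Θ → ℝ | φ u a S = 0} by
    ext u; simp]
  exact null_Z a hS

lemma dense_Gset [Nontrivial A] : Dense (Gset A Θ) := by
  have h1 : volume (interior (Gset A Θ)ᶜ) = 0 :=
    measure_mono_null interior_subset null_Gset_compl
  have h2 : interior (Gset A Θ)ᶜ = ∅ := by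
    by_contra h
    have := isOpen_interior.measure_pos (volume : Measure (A × Θ → ℝ))
      (Set.nonempty_iff_ne_empty.2 h)
    rw [h1] at this
    exact lt_irrefl 0 this
  rw [dense_iff_closure_eq, ← Set.compl_empty_iff, ← interior_compl]
  exact h2

end URgen

/-- **Genericity of the unique-best-response property.** The set `𝒰_R` is open and dense
in `ℝ^{A×Θ}` and its complement is Lebesgue-null. -/
theorem URset_isOpen_dense_ae
    (A Θ : Type) [Fintype A] [Fintype Θ] [Nonempty A] [Nonempty Θ] :
    IsOpen (URset A Θ) ∧ Dense (URset A Θ) ∧ volume (URset A Θ)ᶜ = 0 := by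

  rcases subsingleton_or_nontrivial A with hA | hA
  · have huniv : URset A Θ = Set.univ := by
      ext u
      simp only [URset, Set.mem_setOf_eq, Set.mem_univ, iff_true]
      intro μ hμ a _
      refine ⟨μ, hμ, fun θ h => h, ?_⟩
      ext b
      simp only [Set.mem_singleton_iff]
      constructor
      · intro _; exact Subsingleton.elim b a
      · rintro rfl a'
        rw [Subsingleton.elim a' b]
    rw [huniv]
    refine ⟨isOpen_univ, dense_univ, by simp⟩
  · rw [URgen.URset_eq_Gset]
    exact ⟨URgen.isOpen_Gset, URgen.dense_Gset, URgen.null_Gset_compl⟩
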